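/- Every complex symmetric bounded operator T on a complex Hilbert space H admits a polar decomposition with unitary polar factor: there exists a unitary operator U on H such that T = U ∘ |T|, where |T| = (T* T)^{1/2} is the positive square root of T* T. -/

import Mathlib

open ContinuousLinearMap

/-- A conjugation on a complex Hilbert space: a conjugate-linear, isometric involution. -/
def IsConjugation {H : Type*} [NormedAddCommGroup H] [InnerProductSpace ℂ H]
    (C : H → H) : Prop :=
  (∀ (a : ℂ) (x y : H), C (a • x + y) = (starRingEnd ℂ a) • C x + C y) ∧
  (∀ x, ‖C x‖ = ‖x‖) ∧
  (∀ x, C (C x) = x)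

section Aux

local notation "⟪" x ", " y "⟫" => @inner ℂ _ _ x y

variable {E : Type*} [NormedAddCommGroup E] [InnerProductSpace ℂ E]

lemma IsConjugation.add {C : E → E} (h : IsConjugation C) (x y : E) :
    C (x + y) = C x + C y := by
  simpa using h.1 1 x y

lemma IsConjugation.zero {C : E → E} (h : IsConjugation C) : C 0 = 0 := by
  have := h.1 1 0 0
  simpa using this

lemma IsConjugation.smul {C : E → E} (h : IsConjugation C) (a : ℂ) (x : E) :
    C (a • x) = (starRingEnd ℂ a) • C x := by
  have := h.1 a x 0
  simpa [h.zero] using this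

/-- Every complex Hilbert space admits a conjugation. -/
lemma exists_conjugation (E : Type*) [NormedAddCommGroup E] [InnerProductSpace ℂ E]
    [CompleteSpace E] : ∃ J : E → E, IsConjugation J := by
  obtain ⟨w, b, -⟩ := exists_hilbertBasis ℂ E
  refine ⟨fun x => b.repr.symm (star (b.repr x)), ?_, ?_, ?_⟩
  · intro a x y
    have h : star (b.repr (a • x + y)) =
        (starRingEnd ℂ a) • star (b.repr x) + star (b.repr y) := by
      rw [map_add, map_smul, star_add, star_smul, starRingEnd_apply]
    show b.repr.symm (star (b.repr (a • x + y))) = _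
    rw [h, map_add, map_smul]
  · intro x
    rw [b.repr.symm.norm_map, norm_star, b.repr.norm_map]
  · intro x
    show b.repr.symm (star (b.repr (b.repr.symm (star (b.repr x))))) = x
    rw [b.repr.apply_symm_apply, star_star, b.repr.symm_apply_apply]

end Aux

/-- Every complex symmetric operator `T` admits a polar decomposition `T = U ∘ |T|` with
`U` unitary.  Here `|T|` is given as any positive operator `P` with `P² = T* T` (such a
`P` is unique). -/
theorem complex_symmetric_polar_decomposition_unitary
    {H : Type*} [NormedAddCommGroup H] [InnerProductSpace ℂ H] [CompleteSpace H]
    (T : H →L[ℂ] H)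
    (hT : ∃ C : H → H, IsConjugation C ∧ ∀ x, T x = C (adjoint T (C x)))
    (P : H →L[ℂ] H) (hP : P.IsPositive) (hP2 : P ∘L P = adjoint T ∘L T) :
    ∃ U : H →L[ℂ] H, (adjoint U ∘L U = 1 ∧ U ∘L adjoint U = 1) ∧ T = U ∘L P := by
  obtain ⟨C, hC, hCT⟩ := hT
  have hCadd := hC.add
  have hCsmul := hC.smul
  have hC0 := hC.zero
  have hC2 := hC.2.1
  have hC3 := hC.2.2
  -- `T* (C x) = C (T x)`
  have hCT' : ∀ x : H, adjoint T (C x) = C (T x) := by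
    intro x
    have h := congrArg C (hCT x)
    rw [hC3] at h
    exact h.symm
  have hPadj : adjoint T ∘L T = P ∘L P := hP2.symm
  have hPsa : adjoint P = P := by
    rw [← ContinuousLinearMap.star_eq_adjoint]
    exact hP.isSelfAdjoint
  -- `‖P x‖ = ‖T x‖`
  have hnorm : ∀ x : H, ‖P x‖ = ‖T x‖ := by
    intro x
    have h1 : inner ℂ (P x) (P x) = inner ℂ (T x) (T x) := by
      rw [← ContinuousLinearMap.adjoint_inner_right P, hPsa,
        ← ContinuousLinearMap.comp_apply, hP2, ContinuousLinearMap.comp_apply,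
        ContinuousLinearMap.adjoint_inner_right]
    have h3 : ‖P x‖ ^ 2 = ‖T x‖ ^ 2 := by
      rw [← @inner_self_eq_norm_sq ℂ, ← @inner_self_eq_norm_sq ℂ, h1]
    calc ‖P x‖ = Real.sqrt (‖P x‖ ^ 2) := (Real.sqrt_sq (norm_nonneg _)).symm
      _ = Real.sqrt (‖T x‖ ^ 2) := by rw [h3]
      _ = ‖T x‖ := Real.sqrt_sq (norm_nonneg _)
  -- kernels agree
  have hker : LinearMap.ker (P : H →ₗ[ℂ] H) = LinearMap.ker (T : H →ₗ[ℂ] H) := by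
    ext x
    simp only [LinearMap.mem_ker, ContinuousLinearMap.coe_coe]
    rw [← norm_eq_zero, hnorm, norm_eq_zero]
  haveI : CompleteSpace (LinearMap.ker (P : H →ₗ[ℂ] H)) :=
    (ContinuousLinearMap.isClosed_ker P).completeSpace_coe
  set M : Submodule ℂ H := (LinearMap.ker (P : H →ₗ[ℂ] H))ᗮ with hMdef
  haveI : CompleteSpace M := (Submodule.isClosed_orthogonal _).completeSpace_coe
  -- the range of `P` lies in `M`
  have hPM : ∀ x : H, P x ∈ M := by
    intro x
    rw [hMdef, Submodule.mem_orthogonal]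
    intro u hu
    -- ⟪u, P x⟫ = ⟪P u, x⟫ = 0
    have h := ContinuousLinearMap.adjoint_inner_left P x u
    rw [hPsa] at h
    rw [← h, (show P u = 0 from LinearMap.mem_ker.mp hu), inner_zero_left]
  -- `(range P)ᗮ = ker P`
  have hkerP_rangeP : (LinearMap.range (P : H →ₗ[ℂ] H))ᗮ = LinearMap.ker (P : H →ₗ[ℂ] H) := by
    ext x
    simp only [Submodule.mem_orthogonal, LinearMap.mem_ker]
    constructor
    · intro h
      have hx : ∀ y : H, inner ℂ (P y) x = 0 := fun y =>
        h _ (LinearMap.mem_range.mpr ⟨y, rfl⟩)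
      have h2 : inner ℂ (P x) (P x) = 0 := by
        have h3 := ContinuousLinearMap.adjoint_inner_right P (P x) x
        rw [hPsa] at h3
        -- h3 : ⟪P x, P x⟫ = ⟪P (P x), x⟫
        rw [h3]
        exact hx (P x)
      exact inner_self_eq_zero.mp h2
    · intro h u hu
      obtain ⟨y, rfl⟩ := LinearMap.mem_range.mp hu
      have h3 := ContinuousLinearMap.adjoint_inner_right P y x
      rw [hPsa, (show P x = 0 from h)] at h3
      exact h3.symm.trans (inner_zero_right y)
  have hMclos : (LinearMap.range (P : H →ₗ[ℂ] H)).topologicalClosure = M := by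
    rw [hMdef, ← hkerP_rangeP, Submodule.orthogonal_orthogonal_eq_closure]
  set D : Submodule ℂ H := LinearMap.range (P : H →ₗ[ℂ] H) with hDdef
  -- inclusion of `D` into `M`
  have hDM : ∀ d : D, (d : H) ∈ M := by
    rintro ⟨-, ⟨x, rfl⟩⟩
    exact hPM x
  let e : D →L[ℂ] M := ContinuousLinearMap.codRestrict D.subtypeL M hDM
  have he_iso : Isometry e :=
    AddMonoidHomClass.isometry_of_norm e (fun d => rfl)
  have he_dense : DenseRange e := by
    intro m
    rw [closure_subtype]
    have himg : (Subtype.val '' Set.range e) = (D : Set H) := by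
      ext z
      constructor
      · rintro ⟨-, ⟨d, rfl⟩, rfl⟩
        exact d.2
      · intro hz
        exact ⟨e ⟨z, hz⟩, ⟨⟨z, hz⟩, rfl⟩, rfl⟩
    rw [himg, ← Submodule.topologicalClosure_coe, hMclos]
    exact m.2
  -- `T` factors through `P` isometrically
  have hTeq : ∀ a b : H, P a = P b → T a = T b := by
    intro a b hab
    have h : ‖T a - T b‖ = 0 := by
      rw [← map_sub, ← hnorm, map_sub, hab, sub_self, norm_zero]
    exact sub_eq_zero.mp (norm_eq_zero.mp h)
  -- the map `P x ↦ T x` on `D`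
  let f₀ : D → H := fun d => T (Classical.choose d.2)
  have hf₀spec : ∀ d : D, P (Classical.choose d.2) = (d : H) := fun d =>
    Classical.choose_spec d.2
  have hf₀ : ∀ (d : D) (x : H), P x = (d : H) → f₀ d = T x := by
    intro d x hx
    exact hTeq _ _ (by rw [hf₀spec d, hx])
  let fl : D →ₗ[ℂ] H :=
    { toFun := f₀
      map_add' := by
        intro d d'
        have h1 : f₀ (d + d') = T (Classical.choose d.2 + Classical.choose d'.2) :=
          hf₀ _ _ (by rw [map_add, hf₀spec d, hf₀spec d', Submodule.coe_add])
        show f₀ (d + d') = f₀ d + f₀ d'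
        rw [h1, map_add, hf₀ d _ (hf₀spec d), hf₀ d' _ (hf₀spec d')]
      map_smul' := by
        intro a d
        have h1 : f₀ (a • d) = T (a • Classical.choose d.2) :=
          hf₀ _ _ (by rw [map_smul, hf₀spec d, Submodule.coe_smul])
        show f₀ (a • d) = (RingHom.id ℂ) a • f₀ d
        rw [h1, map_smul, hf₀ d _ (hf₀spec d), RingHom.id_apply]
      }
  let fi : D →ₗᵢ[ℂ] H :=
    ⟨fl, by
      intro d
      show ‖f₀ d‖ = ‖d‖
      rw [hf₀ d _ (hf₀spec d), ← hnorm, hf₀spec d]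
      rfl⟩
  let f : D →L[ℂ] H := fi.toContinuousLinearMap
  -- the partial isometry `V : M → H`
  let V : M →L[ℂ] H := f.extend e
  have hVe : ∀ d : D, V (e d) = f d := fun d =>
    ContinuousLinearMap.extend_eq f he_dense he_iso.isUniformInducing d
  have hVP : ∀ x : H, V ⟨P x, hPM x⟩ = T x := by
    intro x
    have h1 : (⟨P x, hPM x⟩ : M) = e ⟨P x, LinearMap.mem_range.mpr ⟨x, rfl⟩⟩ := rfl
    rw [h1, hVe]
    exact hf₀ _ x rfl
  have hVnorm : ∀ m : M, ‖V m‖ = ‖m‖ := by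
    have hcl : IsClosed {m : M | ‖V m‖ = ‖m‖} :=
      isClosed_eq (continuous_norm.comp V.continuous) continuous_norm
    intro m
    refine he_dense.induction_on m hcl (fun d => ?_)
    rw [hVe]
    have : ‖f d‖ = ‖d‖ := fi.norm_map d
    rw [this]
    exact (he_iso.norm_map_of_map_zero (map_zero e) d).symm
  -- the range of `V` lies in the closure of the range of `T`
  set MT : Submodule ℂ H := (LinearMap.range (T : H →ₗ[ℂ] H)).topologicalClosure with hMTdef
  have hVmem : ∀ m : M, V m ∈ MT := by
    have hcl : IsClosed {m : M | V m ∈ MT} :=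
      (LinearMap.range (T : H →ₗ[ℂ] H)).isClosed_topologicalClosure.preimage V.continuous
    intro m
    refine he_dense.induction_on m hcl (fun d => ?_)
    rw [hVe]
    have : f d = T (Classical.choose d.2) := hf₀ d _ (hf₀spec d)
    rw [this]
    exact (LinearMap.range (T : H →ₗ[ℂ] H)).le_topologicalClosure (LinearMap.mem_range.mpr ⟨_, rfl⟩)
  -- the kernel part
  set K : Submodule ℂ H := Mᗮ with hKdef
  haveI : CompleteSpace K := (Submodule.isClosed_orthogonal _).completeSpace_coe
  have hKker : K = LinearMap.ker (P : H →ₗ[ℂ] H) := by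
    rw [hKdef, hMdef]
    exact Submodule.orthogonal_orthogonal _
  obtain ⟨J, hJ⟩ := exists_conjugation K
  -- the linear isometry `W : K → H`, `k ↦ C (J k)`
  let Wl : K →ₗ[ℂ] H :=
    { toFun := fun k => C ((J k : K) : H)
      map_add' := by
        intro a b
        show C ((J (a + b) : K) : H) = C ((J a : K) : H) + C ((J b : K) : H)
        rw [hJ.add, Submodule.coe_add, hCadd]
      map_smul' := by
        intro a k
        show C ((J (a • k) : K) : H) = (RingHom.id ℂ) a • C ((J k : K) : H)
        rw [hJ.smul, Submodule.coe_smul, hCsmul, RingHom.id_apply,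
          Complex.conj_conj] }
  let W : K →ₗᵢ[ℂ] H :=
    ⟨Wl, by
      intro k
      show ‖C ((J k : K) : H)‖ = ‖k‖
      rw [hC2]
      exact hJ.2.1 k⟩
  have hWapply : ∀ k : K, W k = C ((J k : K) : H) := fun k => rfl
  -- the range of `W` lies in the kernel of `T*`
  have hkerC : ∀ z : H, z ∈ LinearMap.ker (T : H →ₗ[ℂ] H) → adjoint T (C z) = 0 := by
    intro z hz
    rw [hCT' z, (show T z = 0 from LinearMap.mem_ker.mp hz), hC0]
  have hWker : ∀ k : K, adjoint T (W k) = 0 := by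
    intro k
    refine hkerC _ ?_
    rw [← hker, ← hKker]
    exact (J k).2
  -- orthogonality of `MT` and `ker T*`
  have horthoT : ∀ y : H, adjoint T y = 0 → y ∈ (LinearMap.range (T : H →ₗ[ℂ] H))ᗮ := by
    intro y hy
    rw [Submodule.mem_orthogonal]
    rintro u hu
    obtain ⟨x, rfl⟩ := LinearMap.mem_range.mp hu
    have h := ContinuousLinearMap.adjoint_inner_right T x y
    rw [hy, inner_zero_right] at h
    exact h.symm
  have hortho : ∀ t : H, t ∈ MT → ∀ y : H, adjoint T y = 0 → inner ℂ t y = 0 := by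
    intro t ht y hy
    have hto : t ∈ ((LinearMap.range (T : H →ₗ[ℂ] H))ᗮ)ᗮ := by
      have hle : MT ≤ ((LinearMap.range (T : H →ₗ[ℂ] H))ᗮ)ᗮ :=
        Submodule.topologicalClosure_minimal _ (Submodule.le_orthogonal_orthogonal _)
          (Submodule.isClosed_orthogonal _)
      exact hle ht
    have h := (Submodule.mem_orthogonal _ t).mp hto y (horthoT y hy)
    rw [← inner_conj_symm, h, map_zero]
  -- the candidate unitary
  haveI : CompleteSpace (Mᗮ : Submodule ℂ H) :=
    (Submodule.isClosed_orthogonal _).completeSpace_coe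
  let A : H →L[ℂ] H := V ∘L (M.orthogonalProjectionOnto) +
    W.toContinuousLinearMap ∘L ((Mᗮ).orthogonalProjectionOnto)
  have hAapply : ∀ x : H,
      A x = V (M.orthogonalProjectionOnto x) + W ((Mᗮ).orthogonalProjectionOnto x) := fun x => rfl
  -- `A` is an isometry
  have hAnorm : ∀ x : H, ‖A x‖ = ‖x‖ := by
    intro x
    set m := M.orthogonalProjectionOnto x with hm
    set k := (Mᗮ).orthogonalProjectionOnto x with hk2
    have h1 : inner ℂ (V m) ((W k : H)) = 0 :=
      hortho (V m) (hVmem m) (W k) (hWker k)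
    have hx : (m : H) + (k : H) = x :=
      M.starProjection_add_starProjection_orthogonal x
    have h2 : inner ℂ ((m : H)) ((k : H)) = 0 :=
      Submodule.inner_right_of_mem_orthogonal m.2 k.2
    have e1 : ‖A x‖ ^ 2 = ‖V m‖ ^ 2 + ‖(W k : H)‖ ^ 2 := by
      rw [hAapply, @norm_add_sq ℂ _ _ _ _ (V m) (W k), h1]
      simp
    have e2 : ‖x‖ ^ 2 = ‖(m : H)‖ ^ 2 + ‖(k : H)‖ ^ 2 := by
      rw [← hx, @norm_add_sq ℂ _ _ _ _ ((m : H)) ((k : H)), h2]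
      simp
    have e3 : ‖A x‖ ^ 2 = ‖x‖ ^ 2 := by
      rw [e1, e2, hVnorm, W.norm_map]
      rfl
    calc ‖A x‖ = Real.sqrt (‖A x‖ ^ 2) := (Real.sqrt_sq (norm_nonneg _)).symm
      _ = Real.sqrt (‖x‖ ^ 2) := by rw [e3]
      _ = ‖x‖ := Real.sqrt_sq (norm_nonneg _)
  -- `A ∘ P = T`
  have hAP : ∀ x : H, A (P x) = T x := by
    intro x
    rw [hAapply]
    have hm : M.orthogonalProjectionOnto (P x) = ⟨P x, hPM x⟩ := by
      have := Submodule.orthogonalProjectionOnto_mem_subspace_eq_self (⟨P x, hPM x⟩ : M)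
      simpa using this
    have hk : (Mᗮ).orthogonalProjectionOnto (P x) = 0 :=
      Submodule.orthogonalProjectionOnto_apply_of_mem_orthogonal
        (Submodule.le_orthogonal_orthogonal M (hPM x))
    rw [hm, hk, hVP]
    simp
  -- every element of `ker T*` is in the range of `A`
  have hrangeA : ∀ y : H, adjoint T y = 0 → y ∈ Set.range A := by
    intro y hy
    have hCy : C y ∈ K := by
      rw [hKker, hker]
      show T (C y) = 0
      rw [hCT (C y), hC3, hy, hC0]
    refine ⟨((J ⟨C y, hCy⟩ : K) : H), ?_⟩
    rw [hAapply]
    have hm0 : M.orthogonalProjectionOnto ((J ⟨C y, hCy⟩ : K) : H) = 0 :=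
      Submodule.orthogonalProjectionOnto_apply_of_mem_orthogonal (J ⟨C y, hCy⟩).2
    have hkk : (Mᗮ).orthogonalProjectionOnto ((J ⟨C y, hCy⟩ : K) : H) = J ⟨C y, hCy⟩ := by
      have := Submodule.orthogonalProjectionOnto_mem_subspace_eq_self (J ⟨C y, hCy⟩)
      simpa using this
    rw [hm0, hkk, map_zero, zero_add, hWapply, hJ.2.2]
    exact hC3 y
  -- `A` is surjective
  have hAsurj : Function.Surjective A := by
    have hAcl : IsClosed (Set.range A) :=
      ((AddMonoidHomClass.isometry_of_norm A hAnorm).isClosedEmbedding).isClosed_range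
    haveI : CompleteSpace (LinearMap.range (A : H →ₗ[ℂ] H)) := by
      have : IsClosed ((LinearMap.range (A : H →ₗ[ℂ] H) : Submodule ℂ H) : Set H) := by
        rw [LinearMap.coe_range]
        exact hAcl
      exact this.completeSpace_coe
    have hbot : (LinearMap.range (A : H →ₗ[ℂ] H))ᗮ = ⊥ := by
      rw [Submodule.eq_bot_iff]
      intro y hy
      have hyT : adjoint T y = 0 := by
        have hT0 : ∀ x : H, inner ℂ x (adjoint T y) = 0 := by
          intro x
          rw [ContinuousLinearMap.adjoint_inner_right]
          have : T x ∈ LinearMap.range (A : H →ₗ[ℂ] H) := LinearMap.mem_range.mpr ⟨P x, hAP x⟩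
          exact (Submodule.mem_orthogonal _ y).mp hy _ this
        exact inner_self_eq_zero.mp (hT0 (adjoint T y))
      obtain ⟨x, rfl⟩ := hrangeA y hyT
      have h := (Submodule.mem_orthogonal _ _).mp hy (A x) (LinearMap.mem_range.mpr ⟨x, rfl⟩)
      exact inner_self_eq_zero.mp h
    have htop : LinearMap.range (A : H →ₗ[ℂ] H) = ⊤ := Submodule.orthogonal_eq_bot_iff.mp hbot
    exact LinearMap.range_eq_top.mp htop
  -- assemble the unitary
  let U₀ : H →ₗᵢ[ℂ] H := ⟨(A : H →ₗ[ℂ] H), hAnorm⟩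
  have hU₀ : ∀ x : H, U₀ x = A x := fun x => rfl
  let Ue : H ≃ₗᵢ[ℂ] H := LinearIsometryEquiv.ofSurjective U₀ hAsurj
  have hUe : ∀ x : H, Ue x = A x := fun x =>
    congrFun (LinearIsometryEquiv.coe_ofSurjective U₀ hAsurj) x
  refine ⟨(Ue : H →L[ℂ] H), ⟨?_, ?_⟩, ?_⟩
  · refine (ContinuousLinearMap.norm_map_iff_adjoint_comp_self
      ((Ue : H →L[ℂ] H))).mp (fun x => ?_)
    show ‖Ue x‖ = ‖x‖
    exact Ue.norm_map x
  · rw [LinearIsometryEquiv.adjoint_eq_symm]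
    ext x
    simp
  · ext x
    show T x = Ue (P x)
    rw [hUe, hAP]
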